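/- Let G = (T × SU₂)/Γ where T = ℝ/ℤ, SU₂ is the group of unit quaternions, and Γ = {(0, 1), (1/2, −1)}. Then the center of G is the image of T × {1, −1} (isomorphic to T), the commutator subgroup of G is the image of {0, 1/2} × SU₂ (isomorphic to SU₂), and the intersection of the identity component of the center with the commutator subgroup is nontrivial, containing the class of (0, −1). -/

import Mathlib

set_option maxHeartbeats 1000000


/-- The circle group `T = ℝ/ℤ` (written multiplicatively). -/
abbrev TT := Multiplicative (AddCircle (1 : ℝ))

/-- The group `SU₂` of unit quaternions. -/
abbrev SU2 := Metric.sphere (0 : Quaternion ℝ) 1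

/-- `-1` as a unit quaternion. -/
noncomputable def negOne : SU2 := ⟨-1, by simp⟩

/-- The generator `(1/2, -1)` of the central subgroup `Γ = {(0,1), (1/2,−1)}`
of `T × SU₂`. -/
noncomputable def gamma0 : TT × SU2 :=
  (Multiplicative.ofAdd ((1 / 2 : ℝ) : AddCircle (1 : ℝ)), negOne)

theorem gamma0_mem_center : gamma0 ∈ Subgroup.center (TT × SU2) := by
  rw [Subgroup.mem_center_iff]
  intro g
  refine Prod.ext (mul_comm _ _) (Subtype.ext ?_)
  show (g.2 : Quaternion ℝ) * (negOne : Quaternion ℝ) = (negOne : Quaternion ℝ) * g.2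
  have : (negOne : Quaternion ℝ) = -1 := rfl
  simp [this]

/-- `Γ = ⟨(1/2, −1)⟩` is a normal subgroup of `T × SU₂`. -/
instance : (Subgroup.zpowers gamma0).Normal := by
  constructor
  intro n hn g
  obtain ⟨k, rfl⟩ := Subgroup.mem_zpowers_iff.mp hn
  have hc : gamma0 ^ k ∈ Subgroup.center (TT × SU2) :=
    Subgroup.zpow_mem _ gamma0_mem_center k
  have h2 := Subgroup.mem_center_iff.mp hc g
  rw [h2, mul_assoc, mul_inv_cancel, mul_one]
  exact hn

/-- The group `G = (T × SU₂)/Γ`. -/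
abbrev Gquot := (TT × SU2) ⧸ Subgroup.zpowers gamma0

open Quaternion Subgroup
open scoped commutatorElement

/-! ### Quaternion-level lemmas -/

lemma norm_one_of_normSq {q : ℍ[ℝ]} (h : normSq q = 1) : q ∈ Metric.sphere (0:ℍ[ℝ]) 1 := by
  rw [Metric.mem_sphere, dist_zero_right]
  nlinarith [norm_nonneg q, normSq_eq_norm_mul_self q]

lemma normSqCoe (Q : SU2) : normSq (Q : ℍ[ℝ]) = 1 := by
  have := Q.2
  rw [Metric.mem_sphere, dist_zero_right] at this
  rw [normSq_eq_norm_mul_self, this, one_mul]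

noncomputable def mkSU (a b c d : ℝ) (h : a^2+b^2+c^2+d^2 = 1) : SU2 :=
  ⟨⟨a,b,c,d⟩, norm_one_of_normSq ((normSq_def' _).trans h)⟩

lemma keyQ (a b c d e f g : ℝ) (hp : a^2+b^2+c^2+d^2 = 1) (ho : b*e+c*f+d*g = 0) :
    ((⟨a,b,c,d⟩ : ℍ[ℝ]) * (⟨0,e,f,g⟩ : ℍ[ℝ]) * (⟨a,b,c,d⟩ : ℍ[ℝ])) = (⟨0,e,f,g⟩ : ℍ[ℝ]) := by
  ext
  · simp [re_mul]; linear_combination (-2*a)*ho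
  · simp [imI_mul]; linear_combination e*hp + (-2*b)*ho
  · simp [imJ_mul]; linear_combination f*hp + (-2*c)*ho
  · simp [imK_mul]; linear_combination g*hp + (-2*d)*ho

lemma sq_formula (a b c d t : ℝ) (ht2 : t^2 = 2*(1+a)) (ht0 : t ≠ 0) (h : a^2+b^2+c^2+d^2 = 1) :
    ((⟨(1+a)/t,b/t,c/t,d/t⟩:ℍ[ℝ]) * (⟨(1+a)/t,b/t,c/t,d/t⟩:ℍ[ℝ])) = (⟨a,b,c,d⟩:ℍ[ℝ]) := by
  ext
  · simp [re_mul]; field_simp; linear_combination -h - a*ht2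
  · simp [imI_mul]; field_simp; linear_combination -b*ht2
  · simp [imJ_mul]; field_simp; linear_combination -c*ht2
  · simp [imK_mul]; field_simp; linear_combination -d*ht2

lemma exists_sqrt (Q : SU2) :
    ∃ P W : SU2, ((P:ℍ[ℝ]) * (W:ℍ[ℝ]) * (P:ℍ[ℝ]) = (W:ℍ[ℝ])) ∧ P * P = Q := by
  obtain ⟨q, hq⟩ := Q
  have h : q.re^2 + q.imI^2 + q.imJ^2 + q.imK^2 = 1 := by
    have := normSqCoe ⟨q, hq⟩; rwa [normSq_def'] at this
  set a := q.re; set b := q.imI; set c := q.imJ; set d := q.imK with hd'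
  have heta : (⟨a,b,c,d⟩ : ℍ[ℝ]) = q := rfl
  by_cases hv : b = 0 ∧ c = 0 ∧ d = 0
  · obtain ⟨h1, h2, h3⟩ := hv
    have ha2 : (a-1)*(a+1) = 0 := by nlinarith
    rcases mul_eq_zero.mp ha2 with ha | ha
    · refine ⟨1, 1, by simp, ?_⟩
      apply Subtype.ext
      show (1:ℍ[ℝ]) * 1 = q
      rw [← heta]; ext <;> simp [*] <;> linarith
    · refine ⟨mkSU 0 1 0 0 (by norm_num), mkSU 0 0 1 0 (by norm_num), ?_, ?_⟩
      · exact keyQ 0 1 0 0 0 1 0 (by norm_num) (by norm_num)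
      · apply Subtype.ext
        show ((⟨0,1,0,0⟩:ℍ[ℝ]) * (⟨0,1,0,0⟩:ℍ[ℝ]) : ℍ[ℝ]) = q
        rw [← heta]; ext <;> simp [re_mul, imI_mul, imJ_mul, imK_mul, *] <;> linarith
  · have hpos : 0 < 1 + a := by
      by_contra hle
      push_neg at hle
      have hb2 : b^2 + c^2 + d^2 ≤ 0 := by nlinarith
      have hb : b = 0 := by nlinarith [sq_nonneg b, sq_nonneg c, sq_nonneg d]
      have hc : c = 0 := by nlinarith [sq_nonneg b, sq_nonneg c, sq_nonneg d]
      have hdd : d = 0 := by nlinarith [sq_nonneg b, sq_nonneg c, sq_nonneg d]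
      exact hv ⟨hb, hc, hdd⟩
    set t := Real.sqrt (2*(1+a)) with ht
    have ht2 : t^2 = 2*(1+a) := Real.sq_sqrt (by linarith)
    have ht0 : 0 < t := Real.sqrt_pos.mpr (by linarith)
    have hP : ((1+a)/t)^2 + (b/t)^2 + (c/t)^2 + (d/t)^2 = 1 := by
      field_simp
      linear_combination h - ht2
    obtain ⟨e, f, g, hefg, horth⟩ :
        ∃ e f g : ℝ, e^2+f^2+g^2 = 1 ∧ b*e+c*f+d*g = 0 := by
      by_cases hbc : b = 0 ∧ c = 0
      · exact ⟨1, 0, 0, by norm_num, by simp [hbc.1, hbc.2]⟩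
      · have hm : 0 < b^2 + c^2 := by
          rcases not_and_or.mp hbc with hb | hc
          · have : 0 < b^2 := by positivity
            nlinarith [sq_nonneg c]
          · have : 0 < c^2 := by positivity
            nlinarith [sq_nonneg b]
        set m := Real.sqrt (b^2+c^2) with hm'
        have hm2 : m^2 = b^2+c^2 := Real.sq_sqrt (by linarith)
        have hm0 : 0 < m := Real.sqrt_pos.mpr hm
        refine ⟨-c/m, b/m, 0, ?_, ?_⟩
        · field_simp
          linear_combination -hm2
        · field_simp
          ring
    have hW : (0:ℝ)^2 + e^2 + f^2 + g^2 = 1 := by linarith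
    refine ⟨mkSU ((1+a)/t) (b/t) (c/t) (d/t) hP, mkSU 0 e f g hW, ?_, ?_⟩
    · have ho : (b/t)*e + (c/t)*f + (d/t)*g = 0 := by
        field_simp
        linear_combination horth
      exact keyQ _ _ _ _ _ _ _ hP ho
    · apply Subtype.ext
      show ((⟨(1+a)/t,b/t,c/t,d/t⟩:ℍ[ℝ]) * (⟨(1+a)/t,b/t,c/t,d/t⟩:ℍ[ℝ]) : ℍ[ℝ]) = q
      rw [← heta]
      exact sq_formula a b c d t ht2 (ne_of_gt ht0) h

def qIq : ℍ[ℝ] := ⟨0,1,0,0⟩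
def qJq : ℍ[ℝ] := ⟨0,0,1,0⟩

lemma center_q (s : ℍ[ℝ]) (hn : normSq s = 1)
    (hi : s * qIq = qIq * s) (hj : s * qJq = qJq * s) : s = 1 ∨ s = -1 := by
  have hd : s.imK = 0 := by
    have := congrArg QuaternionAlgebra.imJ hi
    rw [imJ_mul, imJ_mul] at this; simp [qIq] at this; linarith
  have hc : s.imJ = 0 := by
    have := congrArg QuaternionAlgebra.imK hi
    rw [imK_mul, imK_mul] at this; simp [qIq] at this; linarith
  have hb : s.imI = 0 := by
    have := congrArg QuaternionAlgebra.imK hj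
    rw [imK_mul, imK_mul] at this; simp [qJq] at this; linarith
  rw [normSq_def'] at hn
  have h : (s.re - 1) * (s.re + 1) = 0 := by nlinarith
  rcases mul_eq_zero.mp h with h | h
  · left; ext <;> simp_all <;> linarith
  · right; ext <;> simp_all <;> linarith

/-! ### SU2-level lemmas -/

noncomputable def suI : SU2 := ⟨qIq, norm_one_of_normSq (by rw [normSq_def']; simp [qIq])⟩
noncomputable def suJ : SU2 := ⟨qJq, norm_one_of_normSq (by rw [normSq_def']; simp [qJq])⟩

lemma commutes_negOne (g : SU2) : g * negOne = negOne * g := by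
  apply Subtype.ext
  rw [Metric.unitSphere.coe_mul, Metric.unitSphere.coe_mul]
  show (g : ℍ[ℝ]) * (-1) = (-1) * (g : ℍ[ℝ])
  simp

lemma central_su2 {s : SU2} (hs : ∀ g : SU2, g * s = s * g) : s = 1 ∨ s = negOne := by
  have hi : (s:ℍ[ℝ]) * qIq = qIq * (s:ℍ[ℝ]) := by
    have := congrArg Subtype.val (hs suI).symm
    rw [Metric.unitSphere.coe_mul, Metric.unitSphere.coe_mul] at this
    exact this
  have hj : (s:ℍ[ℝ]) * qJq = qJq * (s:ℍ[ℝ]) := by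
    have := congrArg Subtype.val (hs suJ).symm
    rw [Metric.unitSphere.coe_mul, Metric.unitSphere.coe_mul] at this
    exact this
  rcases center_q s (normSqCoe s) hi hj with h | h
  · left; exact Subtype.ext h
  · right; exact Subtype.ext h

lemma negOne_sq : negOne * negOne = 1 := by
  apply Subtype.ext
  rw [Metric.unitSphere.coe_mul]
  show (-1 : ℍ[ℝ]) * (-1) = ((1 : SU2) : ℍ[ℝ])
  rw [Metric.unitSphere.coe_one]; simp

/-! ### circle lemmas -/

lemma half_ne_zero' : ((1/2 : ℝ) : AddCircle (1:ℝ)) ≠ 0 := by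
  intro hcontr
  rw [AddCircle.coe_eq_zero_iff] at hcontr
  obtain ⟨n, hn⟩ := hcontr
  have h1 : (n : ℝ) = 1/2 := by
    have := hn; rw [zsmul_eq_mul, mul_one] at this; linarith
  have h2 : ((2*n : ℤ) : ℝ) = ((1:ℤ) : ℝ) := by push_cast; linarith
  have := Int.cast_injective h2
  omega

lemma aHalf_sq : (Multiplicative.ofAdd ((1/2 : ℝ) : AddCircle (1:ℝ))) *
    (Multiplicative.ofAdd ((1/2 : ℝ) : AddCircle (1:ℝ))) = 1 := by
  have h : ((1/2 : ℝ) : AddCircle (1:ℝ)) + ((1/2 : ℝ) : AddCircle (1:ℝ)) = 0 := by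
    rw [← AddCircle.coe_add]
    norm_num
  show Multiplicative.ofAdd (((1/2 : ℝ) : AddCircle (1:ℝ)) + ((1/2 : ℝ) : AddCircle (1:ℝ))) = 1
  rw [h]; rfl

lemma aHalf_ne_one : (Multiplicative.ofAdd ((1/2 : ℝ) : AddCircle (1:ℝ))) ≠ 1 :=
  fun h => half_ne_zero' (by exact_mod_cast h)

/-! ### the subgroup Γ -/

lemma two_elt {G : Type*} [Group G] {g : G} (hg : g * g = 1) {x : G}
    (hx : x ∈ Subgroup.zpowers g) : x = 1 ∨ x = g := by
  obtain ⟨k, rfl⟩ := Subgroup.mem_zpowers_iff.mp hx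
  have h2 : g ^ (2:ℤ) = 1 := by
    rw [show (2:ℤ) = 1 + 1 from rfl, zpow_add, zpow_one]; exact hg
  rcases Int.even_or_odd k with ⟨m, rfl⟩ | ⟨m, rfl⟩
  · left; rw [show m + m = 2*m by ring, zpow_mul, h2, one_zpow]
  · right; rw [zpow_add, zpow_mul, h2, one_zpow, one_mul, zpow_one]

lemma gamma0_sq : gamma0 * gamma0 = 1 := Prod.ext aHalf_sq negOne_sq

lemma mem_gamma {x : TT × SU2} (hx : x ∈ Subgroup.zpowers gamma0) :
    x = 1 ∨ x = gamma0 := two_elt gamma0_sq hx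
/-- In `G = (T × SU₂)/Γ` aux. -/

lemma mk_one_mem_commutator (s : SU2) :
    QuotientGroup.mk' (Subgroup.zpowers gamma0) ((1:TT), s) ∈ commutator Gquot := by
  obtain ⟨P, W, hid, hPP⟩ := exists_sqrt s
  have hPWP : P * W * P = W := by
    apply Subtype.ext
    rw [Metric.unitSphere.coe_mul, Metric.unitSphere.coe_mul]
    exact hid
  have hcomm : ⁅P, W⁆ = P * P := by
    have h1 : W * P⁻¹ = P * W := by
      conv_lhs => rw [← hPWP]
      group
    rw [commutatorElement_def, mul_assoc P W P⁻¹, h1]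
    group
  have hcw : ((1:TT), s) = ⁅(((1:TT), P) : TT × SU2), ((1:TT), W)⁆ := by
    refine Prod.ext ?_ ?_
    · show (1:TT) = ⁅(1:TT), (1:TT)⁆
      group
    · show s = ⁅P, W⁆
      rw [hcomm, hPP]
  rw [hcw, map_commutatorElement, _root_.commutator_def]
  exact Subgroup.commutator_mem_commutator (Subgroup.mem_top _) (Subgroup.mem_top _)

theorem stmt_14 :
    Subgroup.center Gquot =
      Subgroup.map (QuotientGroup.mk' (Subgroup.zpowers gamma0))
        ((⊤ : Subgroup TT).prod (Subgroup.zpowers negOne)) ∧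
    commutator Gquot =
      Subgroup.map (QuotientGroup.mk' (Subgroup.zpowers gamma0))
        ((Subgroup.zpowers
          (Multiplicative.ofAdd ((1 / 2 : ℝ) : AddCircle (1 : ℝ)))).prod
            (⊤ : Subgroup SU2)) ∧
    QuotientGroup.mk' (Subgroup.zpowers gamma0) (1, negOne) ≠ 1 ∧
    QuotientGroup.mk' (Subgroup.zpowers gamma0) (1, negOne) ∈ commutator Gquot ∧
    ∃ h : QuotientGroup.mk' (Subgroup.zpowers gamma0) (1, negOne) ∈
        Subgroup.center Gquot,
      (⟨QuotientGroup.mk' (Subgroup.zpowers gamma0) (1, negOne), h⟩ :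
          Subgroup.center Gquot) ∈
        connectedComponent (1 : Subgroup.center Gquot) := by
  have hcenter : Subgroup.center Gquot =
      Subgroup.map (QuotientGroup.mk' (Subgroup.zpowers gamma0))
        ((⊤ : Subgroup TT).prod (Subgroup.zpowers negOne)) := by
    apply le_antisymm
    · intro x hx
      obtain ⟨⟨t, s⟩, rfl⟩ := QuotientGroup.mk'_surjective (Subgroup.zpowers gamma0) x
      have hcomm : ∀ g₂ : SU2, g₂ * s = s * g₂ := by
        intro g₂
        have h := (Subgroup.mem_center_iff.mp hx)
          (QuotientGroup.mk' (Subgroup.zpowers gamma0) ((1:TT), g₂))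
        rw [← map_mul, ← map_mul, QuotientGroup.mk'_apply, QuotientGroup.mk'_apply,
          QuotientGroup.eq] at h
        rcases mem_gamma h with h3 | h3
        · have h4 := congrArg Prod.snd h3
          have h5 : (g₂ * s)⁻¹ * (s * g₂) = 1 := h4
          exact inv_mul_eq_one.mp h5
        · have h4 := congrArg Prod.fst h3
          have h5 : ((1:TT) * t)⁻¹ * (t * 1) =
              Multiplicative.ofAdd ((1/2 : ℝ) : AddCircle (1:ℝ)) := h4
          rw [one_mul, mul_one, inv_mul_cancel] at h5
          exact absurd h5.symm aHalf_ne_one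
      rcases central_su2 hcomm with hs | hs
      · exact ⟨(t, s), Subgroup.mem_prod.mpr ⟨Subgroup.mem_top _, hs ▸ one_mem _⟩, rfl⟩
      · exact ⟨(t, s), Subgroup.mem_prod.mpr ⟨Subgroup.mem_top _,
          hs ▸ Subgroup.mem_zpowers _⟩, rfl⟩
    · rintro x ⟨⟨t, s⟩, hmem, rfl⟩
      have hs := (Subgroup.mem_prod.mp hmem).2
      rw [Subgroup.mem_center_iff]
      intro y
      refine QuotientGroup.induction_on y fun g => ?_
      have hgs : g * (t, s) = (t, s) * g := by
        refine Prod.ext (mul_comm _ _) ?_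
        obtain ⟨k, rfl⟩ := Subgroup.mem_zpowers_iff.mp hs
        exact (Commute.zpow_right (commutes_negOne g.2) k)
      show QuotientGroup.mk' _ g * QuotientGroup.mk' _ (t, s) =
        QuotientGroup.mk' _ (t, s) * QuotientGroup.mk' _ g
      rw [← map_mul, ← map_mul, hgs]
  have hcommutator : commutator Gquot =
      Subgroup.map (QuotientGroup.mk' (Subgroup.zpowers gamma0))
        ((Subgroup.zpowers
          (Multiplicative.ofAdd ((1 / 2 : ℝ) : AddCircle (1 : ℝ)))).prod
            (⊤ : Subgroup SU2)) := by
    apply le_antisymm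
    · rw [_root_.commutator_def, Subgroup.commutator_le]
      intro x _ y _
      obtain ⟨g, rfl⟩ := QuotientGroup.mk'_surjective (Subgroup.zpowers gamma0) x
      obtain ⟨h, rfl⟩ := QuotientGroup.mk'_surjective (Subgroup.zpowers gamma0) y
      rw [← map_commutatorElement]
      refine Subgroup.mem_map.mpr ⟨⁅g, h⁆, Subgroup.mem_prod.mpr ⟨?_, Subgroup.mem_top _⟩, rfl⟩
      have h1 : (⁅g, h⁆ : TT × SU2).1 = 1 := by
        show g.1 * h.1 * g.1⁻¹ * h.1⁻¹ = 1
        rw [mul_comm g.1 h.1]; group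
      rw [h1]; exact one_mem _
    · rintro x ⟨⟨t, s⟩, hmem, rfl⟩
      have ht : t ∈ Subgroup.zpowers
          (Multiplicative.ofAdd ((1/2 : ℝ) : AddCircle (1:ℝ))) :=
        (Subgroup.mem_prod.mp hmem).1
      rcases two_elt aHalf_sq ht with h1 | h1
      · rw [h1]; exact mk_one_mem_commutator s
      · have heq : QuotientGroup.mk' (Subgroup.zpowers gamma0) (t, s) =
            QuotientGroup.mk' (Subgroup.zpowers gamma0) ((1:TT), negOne * s) := by
          rw [QuotientGroup.mk'_apply, QuotientGroup.mk'_apply, QuotientGroup.eq]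
          have : ((t, s) : TT × SU2)⁻¹ * ((1:TT), negOne * s) = gamma0 := by
            refine Prod.ext ?_ ?_
            · show t⁻¹ * 1 = Multiplicative.ofAdd ((1/2 : ℝ) : AddCircle (1:ℝ))
              rw [mul_one, h1]
              exact inv_eq_of_mul_eq_one_left aHalf_sq
            · show s⁻¹ * (negOne * s) = negOne
              rw [← commutes_negOne s, inv_mul_cancel_left]
          rw [this]
          exact Subgroup.mem_zpowers _
        rw [heq]
        exact mk_one_mem_commutator _
  have hne : QuotientGroup.mk' (Subgroup.zpowers gamma0) (1, negOne) ≠ 1 := by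
    intro hcontr
    rw [QuotientGroup.mk'_apply, QuotientGroup.eq_one_iff] at hcontr
    rcases mem_gamma hcontr with h | h
    · have := congrArg Prod.snd h
      have h2 : negOne = 1 := this
      have h3 := congrArg Subtype.val h2
      rw [Metric.unitSphere.coe_one] at h3
      have h4 : (-1 : ℍ[ℝ]).re = (1 : ℍ[ℝ]).re := congrArg QuaternionAlgebra.re h3
      simp at h4
      linarith
    · have := congrArg Prod.fst h
      have h2 : (1:TT) = Multiplicative.ofAdd ((1/2 : ℝ) : AddCircle (1:ℝ)) := this
      exact aHalf_ne_one h2.symm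
  have hmemc : QuotientGroup.mk' (Subgroup.zpowers gamma0) (1, negOne) ∈
      commutator Gquot := mk_one_mem_commutator negOne
  have hcen : QuotientGroup.mk' (Subgroup.zpowers gamma0) (1, negOne) ∈
      Subgroup.center Gquot := by
    rw [hcenter]
    exact ⟨(1, negOne), Subgroup.mem_prod.mpr
      ⟨Subgroup.mem_top _, Subgroup.mem_zpowers _⟩, rfl⟩
  refine ⟨hcenter, hcommutator, hne, hmemc, hcen, ?_⟩
  -- connectedness
  set F : ℝ → Subgroup.center Gquot := fun r =>
    ⟨QuotientGroup.mk' (Subgroup.zpowers gamma0)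
        (Multiplicative.ofAdd ((r : ℝ) : AddCircle (1:ℝ)), 1), by
      rw [hcenter]
      exact ⟨(Multiplicative.ofAdd ((r : ℝ) : AddCircle (1:ℝ)), 1),
        Subgroup.mem_prod.mpr ⟨Subgroup.mem_top _, one_mem _⟩, rfl⟩⟩ with hF'
  have hFcont : Continuous F := by
    apply Continuous.subtype_mk
    exact QuotientGroup.continuous_mk.comp
      ((continuous_ofAdd.comp (AddCircle.continuous_mk' 1)).prodMk continuous_const)
  have hconn := isConnected_range hFcont
  have h0 : (1 : Subgroup.center Gquot) = F 0 := by
    apply Subtype.ext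
    show (1 : Gquot) = QuotientGroup.mk' (Subgroup.zpowers gamma0)
      (Multiplicative.ofAdd ((0 : ℝ) : AddCircle (1:ℝ)), 1)
    have : (Multiplicative.ofAdd (((0:ℝ) : AddCircle (1:ℝ))), (1:SU2)) = (1 : TT × SU2) := by
      refine Prod.ext ?_ rfl
      show Multiplicative.ofAdd (((0:ℝ) : AddCircle (1:ℝ))) = 1
      norm_num
    rw [this, map_one]
  have hhalf : F (1/2) = ⟨QuotientGroup.mk' (Subgroup.zpowers gamma0) (1, negOne), hcen⟩ := by
    apply Subtype.ext
    show QuotientGroup.mk' (Subgroup.zpowers gamma0)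
        (Multiplicative.ofAdd (((1/2:ℝ) : AddCircle (1:ℝ))), 1) =
      QuotientGroup.mk' (Subgroup.zpowers gamma0) (1, negOne)
    rw [QuotientGroup.mk'_apply, QuotientGroup.mk'_apply, QuotientGroup.eq]
    have : ((Multiplicative.ofAdd (((1/2:ℝ) : AddCircle (1:ℝ))), (1:SU2)) : TT × SU2)⁻¹ *
        ((1:TT), negOne) = gamma0 := by
      refine Prod.ext ?_ ?_
      · show (Multiplicative.ofAdd (((1/2:ℝ) : AddCircle (1:ℝ))))⁻¹ * 1 =
          Multiplicative.ofAdd ((1/2 : ℝ) : AddCircle (1:ℝ))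
        rw [mul_one]
        exact inv_eq_of_mul_eq_one_left aHalf_sq
      · show (1:SU2)⁻¹ * negOne = negOne
        rw [inv_one, one_mul]
    rw [this]
    exact Subgroup.mem_zpowers _
  have hsub := hconn.subset_connectedComponent (x := (1 : Subgroup.center Gquot))
    ⟨0, h0.symm⟩
  exact hsub ⟨1/2, hhalf⟩
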